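/- Let g : (Fin n → Bool) → K be single-flip monotone for k. Then for every set X ⊆ Fin n, X is an original weak abductive explanation (i.e., g b = k for every assignment b with b j = true for all j ∈ X) if and only if g bX = k, where bX is the canonical abductive assignment of X (bX j = true iff j ∈ X). -/

import Mathlib

open scoped Classical

/-- If `g` is single-flip monotone for `k`, then a set `X ⊆ Fin n`
is an original weak abductive explanation iff the simplified check on the canonical
abductive assignment `bX` (true exactly on `X`) succeeds. -/
theorem weakConAXp_iff_canonical {n : ℕ} {K : Type*} (k : K)
    (g : (Fin n → Bool) → K)
    (hmono : ∀ (b : Fin n → Bool) (j : Fin n),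
      g b = k → g (Function.update b j true) = k)
    (X : Set (Fin n)) :
    (∀ b : Fin n → Bool, (∀ j ∈ X, b j = true) → g b = k) ↔
      g (fun j => decide (j ∈ X)) = k := by
  constructor
  · intro h
    exact h _ (fun j hj => by simp [hj])
  · intro hk b hb
    have key : ∀ s : Finset (Fin n), ∀ b0 : Fin n → Bool, g b0 = k →
        g (fun j => b0 j || decide (j ∈ s)) = k := by
      intro s
      induction s using Finset.induction with
      | empty => intro b0 h0; simpa using h0
      | insert a s ha ih =>
        intro b0 h0
        have h1 := hmono _ a (ih b0 h0)
        convert h1 using 2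
        funext j
        by_cases hj : j = a <;> simp [hj, Function.update]
    have hb' : b = fun j => decide (j ∈ X) || decide (j ∈ Finset.univ.filter (fun j => b j = true)) := by
      funext j
      by_cases hj : j ∈ X
      · simp [hj, hb j hj]
      · simp [hj]
    rw [hb']
    exact key _ _ hk
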